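/- Let s, r > 0 and let X be the boundary of the square [0, s]². There exists a finite set of points Y ⊆ ℝ² with |Y| ≤ 12·(s/r + 4) such that every closed disk of radius at least r whose boundary circle or interior intersects X contains at least one point of Y. -/

import Mathlib

open Real Set Metric

/-- The axis-aligned square `[0, s] × [0, s]` in the Euclidean plane. -/
def square (s : ℝ) : Set (EuclideanSpace ℝ (Fin 2)) :=
  {x | x 0 ∈ Set.Icc 0 s ∧ x 1 ∈ Set.Icc 0 s}

noncomputable def Hset (s r : ℝ) : Finset ℝ :=
  (Finset.range (⌈s / r⌉₊ + 3)).image (fun i : ℕ => -r + (i : ℝ) * r)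

noncomputable def Eset (s r : ℝ) : Finset ℝ := {-r/2, r/2, s - r/2, s + r/2}

noncomputable def deq : DecidableEq (EuclideanSpace ℝ (Fin 2)) := Classical.decEq _

noncomputable def Yset (s r : ℝ) : Finset (EuclideanSpace ℝ (Fin 2)) :=
  @Finset.image _ _ deq (fun p : ℝ × ℝ => (!₂[p.1, p.2] : EuclideanSpace ℝ (Fin 2)))
    ((Hset s r ×ˢ Eset s r) ∪ (Eset s r ×ˢ Hset s r))

lemma mem_Yset_HE {s r a b : ℝ} (ha : a ∈ Hset s r) (hb : b ∈ Eset s r) :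
    (!₂[a, b] : EuclideanSpace ℝ (Fin 2)) ∈ Yset s r := by
  unfold Yset
  exact (@Finset.mem_image _ _ deq _ _ _).2 ⟨(a, b),
    Finset.mem_union_left _ (Finset.mem_product.2 ⟨ha, hb⟩), rfl⟩

lemma mem_Yset_EH {s r a b : ℝ} (ha : a ∈ Eset s r) (hb : b ∈ Hset s r) :
    (!₂[a, b] : EuclideanSpace ℝ (Fin 2)) ∈ Yset s r := by
  unfold Yset
  exact (@Finset.mem_image _ _ deq _ _ _).2 ⟨(a, b),
    Finset.mem_union_right _ (Finset.mem_product.2 ⟨ha, hb⟩), rfl⟩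

lemma dist_pt (x y : EuclideanSpace ℝ (Fin 2)) :
    dist x y = Real.sqrt ((x 0 - y 0)^2 + (x 1 - y 1)^2) := by
  rw [EuclideanSpace.dist_eq, Fin.sum_univ_two, Real.dist_eq, Real.dist_eq, sq_abs, sq_abs]

lemma coord_le_dist (x y : EuclideanSpace ℝ (Fin 2)) (i : Fin 2) :
    |x i - y i| ≤ dist x y := by
  rw [dist_pt]
  fin_cases i
  · show |x 0 - y 0| ≤ _
    rw [← Real.sqrt_sq_eq_abs]
    exact Real.sqrt_le_sqrt (by nlinarith [sq_nonneg (x 1 - y 1)])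
  · show |x 1 - y 1| ≤ _
    rw [← Real.sqrt_sq_eq_abs]
    exact Real.sqrt_le_sqrt (by nlinarith [sq_nonneg (x 0 - y 0)])

lemma dist_le_of_coords {r : ℝ} (hr : 0 ≤ r) (x y : EuclideanSpace ℝ (Fin 2))
    (h0 : |x 0 - y 0| ≤ r/2) (h1 : |x 1 - y 1| ≤ r/2) : dist x y ≤ r := by
  rw [dist_pt]
  have h0' := abs_le.1 h0
  have h1' := abs_le.1 h1
  calc Real.sqrt ((x 0 - y 0)^2 + (x 1 - y 1)^2) ≤ Real.sqrt (r^2) :=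
        Real.sqrt_le_sqrt (by nlinarith)
    _ = r := Real.sqrt_sq hr

lemma Hset_cover {s r : ℝ} (hr : 0 < r) (hs : 0 ≤ s) {t : ℝ} (h1 : -r ≤ t) (h2 : t ≤ s + r) :
    ∃ a ∈ Hset s r, |t - a| ≤ r / 2 := by
  set u := (t + r) / r with hu
  have hu0 : 0 ≤ u := div_nonneg (by linarith) hr.le
  have hur : u * r = t + r := div_mul_cancel₀ _ hr.ne'
  have hu1 : u ≤ s / r + 2 := by
    rw [hu, div_add' _ _ _ hr.ne', div_le_div_iff₀ hr hr]
    nlinarith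
  set i := ⌊u + 1/2⌋₊ with hi
  have hfl : (i : ℝ) ≤ u + 1/2 := Nat.floor_le (by linarith)
  have hfl2 : u + 1/2 < i + 1 := Nat.lt_floor_add_one _
  have hceil : s / r ≤ (⌈s / r⌉₊ : ℝ) := Nat.le_ceil _
  refine ⟨-r + i * r, ?_, ?_⟩
  · refine Finset.mem_image.2 ⟨i, Finset.mem_range.2 ?_, rfl⟩
    have : (i : ℝ) < (⌈s / r⌉₊ : ℝ) + 3 := by linarith
    exact_mod_cast this
  · have : t - (-r + i * r) = (u - i) * r := by
      have : t = u * r - r := by linarith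
      rw [this]; ring
    rw [this, abs_mul, abs_of_pos hr]
    have : |u - (i:ℝ)| ≤ 1/2 := abs_le.2 ⟨by linarith, by linarith⟩
    nlinarith
lemma Eset_cover {s r : ℝ} (hr : 0 < r) {e u : ℝ} (he : e = 0 ∨ e = s) (h : |u - e| ≤ r) :
    ∃ b ∈ Eset s r, |u - b| ≤ r / 2 := by
  have h' := abs_le.1 h
  rcases le_total u e with h2 | h2
  · refine ⟨e - r/2, ?_, abs_le.2 ⟨by linarith, by linarith⟩⟩
    simp only [Eset, Finset.mem_insert, Finset.mem_singleton]
    rcases he with rfl | rfl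
    · exact Or.inl (by ring)
    · exact Or.inr (Or.inr (Or.inl rfl))
  · refine ⟨e + r/2, ?_, abs_le.2 ⟨by linarith, by linarith⟩⟩
    simp only [Eset, Finset.mem_insert, Finset.mem_singleton]
    rcases he with rfl | rfl
    · exact Or.inr (Or.inl (by ring))
    · exact Or.inr (Or.inr (Or.inr rfl))

lemma frontier_square_subset (s : ℝ) :
    frontier (square s) ⊆ {z | (z 0 ∈ Set.Icc 0 s ∧ z 1 ∈ Set.Icc 0 s) ∧
      (z 0 = 0 ∨ z 0 = s ∨ z 1 = 0 ∨ z 1 = s)} := by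
  have hc0 : Continuous (fun x : EuclideanSpace ℝ (Fin 2) => x 0) :=
    (EuclideanSpace.proj (𝕜 := ℝ) (0 : Fin 2)).continuous
  have hc1 : Continuous (fun x : EuclideanSpace ℝ (Fin 2) => x 1) :=
    (EuclideanSpace.proj (𝕜 := ℝ) (1 : Fin 2)).continuous
  have hsq : square s = (fun x : EuclideanSpace ℝ (Fin 2) => x 0) ⁻¹' Set.Icc 0 s ∩
      (fun x : EuclideanSpace ℝ (Fin 2) => x 1) ⁻¹' Set.Icc 0 s := rfl
  have hclosed : IsClosed (square s) := by
    rw [hsq]; exact (isClosed_Icc.preimage hc0).inter (isClosed_Icc.preimage hc1)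
  have hopen : IsOpen ((fun x : EuclideanSpace ℝ (Fin 2) => x 0) ⁻¹' Set.Ioo 0 s ∩
      (fun x : EuclideanSpace ℝ (Fin 2) => x 1) ⁻¹' Set.Ioo 0 s) :=
    (isOpen_Ioo.preimage hc0).inter (isOpen_Ioo.preimage hc1)
  intro z hz
  have hz1 : z ∈ square s := hclosed.closure_eq ▸ hz.1
  have hz2 : z ∉ interior (square s) := hz.2
  have hsub : (fun x : EuclideanSpace ℝ (Fin 2) => x 0) ⁻¹' Set.Ioo 0 s ∩
      (fun x : EuclideanSpace ℝ (Fin 2) => x 1) ⁻¹' Set.Ioo 0 s ⊆ interior (square s) := by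
    apply interior_maximal _ hopen
    rw [hsq]
    exact Set.inter_subset_inter (Set.preimage_mono Set.Ioo_subset_Icc_self)
      (Set.preimage_mono Set.Ioo_subset_Icc_self)
  have hnot : ¬ (z 0 ∈ Set.Ioo 0 s ∧ z 1 ∈ Set.Ioo 0 s) := fun h => hz2 (hsub h)
  obtain ⟨⟨h00, h01⟩, h10, h11⟩ := hz1
  refine ⟨⟨⟨h00, h01⟩, ⟨h10, h11⟩⟩, ?_⟩
  by_contra hcon
  push_neg at hcon
  obtain ⟨e1, e2, e3, e4⟩ := hcon
  exact hnot ⟨⟨lt_of_le_of_ne h00 (Ne.symm e1), lt_of_le_of_ne h01 e2⟩,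
    ⟨lt_of_le_of_ne h10 (Ne.symm e3), lt_of_le_of_ne h11 e4⟩⟩

lemma key {s r : ℝ} (hs : 0 < s) (hr : 0 < r) (c' z : EuclideanSpace ℝ (Fin 2))
    (hz : z ∈ frontier (square s)) (hd : dist c' z ≤ r) :
    ∃ y ∈ Yset s r, dist y c' ≤ r := by
  obtain ⟨⟨⟨h00, h01⟩, h10, h11⟩, hedge⟩ := frontier_square_subset s hz
  have hd0 : |c' 0 - z 0| ≤ r := (coord_le_dist c' z 0).trans hd
  have hd1 : |c' 1 - z 1| ≤ r := (coord_le_dist c' z 1).trans hd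
  have hd0' := abs_le.1 hd0
  have hd1' := abs_le.1 hd1
  rcases hedge with he | he | he | he
  · -- left edge: z 0 = 0
    obtain ⟨b, hbE, hb⟩ := Eset_cover (s := s) hr (Or.inl rfl) (he ▸ hd0)
    obtain ⟨a, haH, ha⟩ := Hset_cover (s := s) hr hs.le (t := c' 1) (by linarith) (by linarith)
    refine ⟨!₂[b, a], mem_Yset_EH hbE haH, ?_⟩
    apply dist_le_of_coords hr.le
    · show |b - c' 0| ≤ r/2; rw [abs_sub_comm]; exact hb
    · show |a - c' 1| ≤ r/2; rw [abs_sub_comm]; exact ha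
  · -- right edge: z 0 = s
    obtain ⟨b, hbE, hb⟩ := Eset_cover (s := s) hr (Or.inr rfl) (he ▸ hd0)
    obtain ⟨a, haH, ha⟩ := Hset_cover (s := s) hr hs.le (t := c' 1) (by linarith) (by linarith)
    refine ⟨!₂[b, a], mem_Yset_EH hbE haH, ?_⟩
    apply dist_le_of_coords hr.le
    · show |b - c' 0| ≤ r/2; rw [abs_sub_comm]; exact hb
    · show |a - c' 1| ≤ r/2; rw [abs_sub_comm]; exact ha
  · -- bottom edge: z 1 = 0
    obtain ⟨b, hbE, hb⟩ := Eset_cover (s := s) hr (Or.inl rfl) (he ▸ hd1)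
    obtain ⟨a, haH, ha⟩ := Hset_cover (s := s) hr hs.le (t := c' 0) (by linarith) (by linarith)
    refine ⟨!₂[a, b], mem_Yset_HE haH hbE, ?_⟩
    apply dist_le_of_coords hr.le
    · show |a - c' 0| ≤ r/2; rw [abs_sub_comm]; exact ha
    · show |b - c' 1| ≤ r/2; rw [abs_sub_comm]; exact hb
  · -- top edge: z 1 = s
    obtain ⟨b, hbE, hb⟩ := Eset_cover (s := s) hr (Or.inr rfl) (he ▸ hd1)
    obtain ⟨a, haH, ha⟩ := Hset_cover (s := s) hr hs.le (t := c' 0) (by linarith) (by linarith)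
    refine ⟨!₂[a, b], mem_Yset_HE haH hbE, ?_⟩
    apply dist_le_of_coords hr.le
    · show |a - c' 0| ≤ r/2; rw [abs_sub_comm]; exact ha
    · show |b - c' 1| ≤ r/2; rw [abs_sub_comm]; exact hb

theorem stmt10 (s r : ℝ) (hs : 0 < s) (hr : 0 < r) :
    ∃ Y : Finset (EuclideanSpace ℝ (Fin 2)),
      (Y.card : ℝ) ≤ 12 * (s / r + 4) ∧
      ∀ (c : EuclideanSpace ℝ (Fin 2)) (ρ : ℝ), r ≤ ρ →
        (Metric.closedBall c ρ ∩ frontier (square s)).Nonempty →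
        ∃ y ∈ Y, y ∈ Metric.closedBall c ρ := by
  refine ⟨Yset s r, ?_, ?_⟩
  · -- cardinality
    have hH : (Hset s r).card ≤ ⌈s / r⌉₊ + 3 := by
      unfold Hset
      exact (Finset.card_image_le).trans (by rw [Finset.card_range])
    have hE : (Eset s r).card ≤ 4 := by
      simp only [Eset]
      refine (Finset.card_insert_le _ _).trans ?_
      refine Nat.succ_le_succ ((Finset.card_insert_le _ _).trans ?_)
      exact Nat.succ_le_succ ((Finset.card_insert_le _ _).trans (by simp))
    have hY : (Yset s r).card ≤ 8 * (⌈s / r⌉₊ + 3) := by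
      unfold Yset
      refine (@Finset.card_image_le _ _ _ _ deq).trans ?_
      refine (Finset.card_union_le _ _).trans ?_
      rw [Finset.card_product, Finset.card_product]
      nlinarith [hH, hE, (Hset s r).card.zero_le, (Eset s r).card.zero_le]
    have hceil : (⌈s / r⌉₊ : ℝ) ≤ s / r + 1 :=
      (Nat.ceil_lt_add_one (div_nonneg hs.le hr.le)).le
    have hsr : 0 ≤ s / r := div_nonneg hs.le hr.le
    calc ((Yset s r).card : ℝ) ≤ 8 * ((⌈s / r⌉₊ : ℝ) + 3) := by exact_mod_cast hY
      _ ≤ 12 * (s / r + 4) := by linarith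
  · rintro c ρ hρ ⟨z, hzball, hzfr⟩
    have hdz : dist c z ≤ ρ := by rw [dist_comm]; exact mem_closedBall.1 hzball
    by_cases hd : dist c z ≤ r
    · obtain ⟨y, hy, hyd⟩ := key hs hr c z hzfr hd
      exact ⟨y, hy, mem_closedBall.2 (hyd.trans hρ)⟩
    · push_neg at hd
      set d := dist c z with hdd
      have hdpos : 0 < d := hr.trans hd
      set c' : EuclideanSpace ℝ (Fin 2) := z + (r / d) • (c - z) with hc'
      have hc'z : dist c' z = r := by
        rw [dist_eq_norm, hc', add_sub_cancel_left, norm_smul, Real.norm_eq_abs,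
          abs_of_pos (div_pos hr hdpos), ← dist_eq_norm, ← hdd]
        field_simp
      have hcc' : dist c c' = d - r := by
        have h1 : c - c' = (1 - r / d) • (c - z) := by
          rw [hc', sub_smul, one_smul]
          abel
        rw [dist_eq_norm, h1, norm_smul, Real.norm_eq_abs,
          abs_of_nonneg (by rw [sub_nonneg]; exact (div_le_one hdpos).2 hd.le),
          ← dist_eq_norm, ← hdd]
        field_simp
      obtain ⟨y, hy, hyd⟩ := key hs hr c' z hzfr (le_of_eq hc'z)
      refine ⟨y, hy, mem_closedBall.2 ?_⟩
      calc dist y c ≤ dist y c' + dist c' c := dist_triangle _ _ _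
        _ = dist y c' + dist c c' := by rw [dist_comm c' c]
        _ ≤ r + (d - r) := add_le_add hyd (le_of_eq hcc')
        _ = d := by ring
        _ ≤ ρ := hdz
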